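/- The relation α²_M ⊂ ∧²T(∧²T*M) × T*(∧²TM), defined as the dual of the converse of κ²_M via the pairings d_T^2 Δ²_M and the canonical pairing of T*(∧²TM) with T(∧²TM), is the graph of a smooth map given in coordinates by (x^μ, ẋ^{νσ}, p_ρ, f_{λκ}) ∘ α²_M = (x^μ, ẋ^{νσ}, −y^η_{ηρ}, −p_{λκ}), where (x^μ, p_{λκ}, ẋ^{νσ}, y^η_{θρ}, ṗ_{γδεζ}) are the coordinates on ∧²T(∧²T*M). -/

import Mathlib

noncomputable section

/-- Coordinate model of vectors: functions on an index set. -/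
abbrev Vec (ι : Type) := ι → ℝ

/-- Coordinate model of bivectors on `Vec ι`: (antisymmetric) matrices. -/
abbrev Biv (ι : Type) := ι → ι → ℝ

/-- Antisymmetry of a bivector matrix. -/
def IsAnti {ι : Type} (u : Biv ι) : Prop := ∀ a b, u a b = - u b a

/-- Raw coordinate model of the exterior derivative of a `k`-form
(given as a function of a point and `k` tangent vectors). -/
def Dext {A : Type} [NormedAddCommGroup A] [NormedSpace ℝ A] {k : ℕ}
    (φ : A → (Fin k → A) → ℝ) : A → (Fin (k+1) → A) → ℝ :=
  fun x w => ∑ i : Fin (k+1), (-1 : ℝ)^(i : ℕ) *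
    fderiv ℝ (fun y => φ y (fun j => w (i.succAbove j))) x (w i)

/-- Pull-back of a raw `k`-form along a map. -/
def pullF {A B : Type} [NormedAddCommGroup A] [NormedSpace ℝ A]
    [NormedAddCommGroup B] [NormedSpace ℝ B] {k : ℕ}
    (f : A → B) (φ : B → (Fin k → B) → ℝ) : A → (Fin k → A) → ℝ :=
  fun x w => φ (f x) (fun i => fderiv ℝ f x (w i))

/-- The operator `i_T^2`: insertion of the bivector into the first two slots of a
`(k+2)`-form on the base, producing a semi-basic `k`-form on `∧²TN`
(modelled on `Vec ι × Biv ι`; only the base components of the arguments are used,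
reflecting semi-basicity). -/
def iT2 {ι : Type} [Fintype ι] [DecidableEq ι] {k : ℕ}
    (φ : Vec ι → (Fin (k+2) → Vec ι) → ℝ) :
    (Vec ι × Biv ι) → (Fin k → Vec ι × Biv ι) → ℝ :=
  fun p w => (1/2 : ℝ) * ∑ a, ∑ b, p.2 a b *
    φ p.1 (Matrix.vecCons (Pi.single a 1)
      (Matrix.vecCons (Pi.single b 1) (fun i => (w i).1)))

/-- The operator `d_T^2 = d ∘ i_T^2 − i_T^2 ∘ d` on `(k+2)`-forms, `k ≥ 0`. -/
def dT2 {ι : Type} [Fintype ι] [DecidableEq ι] {k : ℕ}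
    (φ : Vec ι → (Fin (k+2) → Vec ι) → ℝ) :
    (Vec ι × Biv ι) → (Fin (k+1) → Vec ι × Biv ι) → ℝ :=
  fun p w => Dext (iT2 φ) p w - iT2 (Dext φ) p w

/-- `i_T^2` on 1-forms lands in `(−1)`-forms, i.e. is zero. -/
def iT2one {ι : Type} (_φ : Vec ι → (Fin 1 → Vec ι) → ℝ) :
    (Vec ι × Biv ι) → ℝ := fun _ => 0

/-- `d_T^2` on 1-forms: `d ∘ i_T^2 − i_T^2 ∘ d = − i_T^2 ∘ d`. -/
def dT2one {ι : Type} [Fintype ι] [DecidableEq ι]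
    (φ : Vec ι → (Fin 1 → Vec ι) → ℝ) : (Vec ι × Biv ι) → ℝ :=
  fun p => - iT2 (Dext φ) p (fun i => i.elim0)

end

noncomputable section

variable {ι : Type} [Fintype ι] [DecidableEq ι]

/-!
STATEMENT 10: The relation `α²_M ⊂ ∧²T(∧²T*M) × T*(∧²TM)`, defined as the dual of the
converse of `κ²_M` via the pairing `d_T^2 Δ²_M` and the canonical pairing of `T*(∧²TM)`
with `T(∧²TM)`, is the graph of a smooth map given in coordinates by
`(x^μ, ẋ^{νσ}, p_ρ, f_{λκ}) ∘ α²_M = (x^μ, ẋ^{νσ}, −y^η_{ηρ}, −p_{λκ})`.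

Coordinate model:
* `∧²T(∧²T*M)`: a base point `b : Vec (ι ⊕ ι × ι)` (coordinates `x^μ, p_{μν}`) and an
  antisymmetric matrix `U : Biv (ι ⊕ ι × ι)` (blocks `ẋ^{μν}, y^μ_{νλ}, ṗ`);
* `T*(∧²TM)`: `(x', Ẋ, pc, f)` with `pc_ρ dx^ρ + (1/2) f_{λκ} dẋ^{λκ}` at `(x', Ẋ)`;
* `w ∈ ∧²T(TM)` with `∧²Tτ_M(w) = π_{∧²TM}(p̃)` and a lift `W` of `(u,w)` to
  `∧²T(TM ×_M ∧²T*M)` (all lifts give the same value of the semi-basic `d_T^2 Δ²_M`);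
* `⟨p̃, κ²_M(w)⟩ = ∑ pc_ρ ẋ^ρ_w + (1/2)∑ f_{λκ}(y_w^{λκ} − y_w^{κλ})` by the coordinate
  form of `κ²_M`.
-/


set_option linter.unusedSectionVars false

section Aux
variable {J : Type} [Fintype J] [DecidableEq J]

lemma diff_coord (i : J) (P : Vec J) : DifferentiableAt ℝ (fun y : Vec J => y i) P :=
  (ContinuousLinearMap.proj (R := ℝ) (φ := fun _ : J => ℝ) i).differentiableAt

lemma fderiv_coord (i : J) (P v : Vec J) : fderiv ℝ (fun y : Vec J => y i) P v = v i := by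
  have : (fun y : Vec J => y i) = (ContinuousLinearMap.proj (R := ℝ) (φ := fun _ : J => ℝ) i) := rfl
  rw [this, ContinuousLinearMap.fderiv]
  rfl

lemma fderiv_prod_coord (i j : J) (P v : Vec J) :
    fderiv ℝ (fun y : Vec J => y i * y j) P v = v i * P j + P i * v j := by
  rw [fderiv_fun_mul (diff_coord i P) (diff_coord j P)]
  simp [fderiv_coord]
  ring

lemma fderiv_sum_prod {K : Type} [Fintype K] (A B : K → J) (e : K → ℝ) (P v : Vec J) :
    fderiv ℝ (fun y : Vec J => ∑ k, y (A k) * y (B k) * e k) P v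
      = ∑ k, (v (A k) * P (B k) + P (A k) * v (B k)) * e k := by
  have hd : ∀ k : K, DifferentiableAt ℝ (fun y : Vec J => y (A k) * y (B k) * e k) P :=
    fun k => ((diff_coord (A k) P).mul (diff_coord (B k) P)).mul_const _
  rw [fderiv_fun_sum (fun k _ => hd k), ContinuousLinearMap.sum_apply]
  refine Finset.sum_congr rfl fun k _ => ?_
  rw [fderiv_mul_const ((diff_coord (A k) P).fun_mul (diff_coord (B k) P))]
  simp [fderiv_prod_coord]
  ring

end Aux

section Aux2
variable {ι : Type} [Fintype ι] [DecidableEq ι]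

lemma key_fderiv (e P v : Vec (ι ⊕ (ι ⊕ ι × ι))) :
    fderiv ℝ (fun y : Vec (ι ⊕ (ι ⊕ ι × ι)) =>
        ∑ ν, (∑ μ, y (Sum.inr (Sum.inr (μ, ν))) * y (Sum.inr (Sum.inl μ))) * e (Sum.inl ν)) P v
      = ∑ ν, (∑ μ, (v (Sum.inr (Sum.inr (μ, ν))) * P (Sum.inr (Sum.inl μ))
          + P (Sum.inr (Sum.inr (μ, ν))) * v (Sum.inr (Sum.inl μ)))) * e (Sum.inl ν) := by
  have h1 : (fun y : Vec (ι ⊕ (ι ⊕ ι × ι)) =>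
      ∑ ν, (∑ μ, y (Sum.inr (Sum.inr (μ, ν))) * y (Sum.inr (Sum.inl μ))) * e (Sum.inl ν))
      = fun y => ∑ q : ι × ι, y (Sum.inr (Sum.inr q)) * y (Sum.inr (Sum.inl q.1)) * e (Sum.inl q.2) := by
    funext y
    rw [Fintype.sum_prod_type, Finset.sum_comm]
    simp [Finset.sum_mul]
  rw [h1, fderiv_sum_prod (fun q : ι × ι => Sum.inr (Sum.inr q)) (fun q => Sum.inr (Sum.inl q.1))
    (fun q => e (Sum.inl q.2)) P v]
  rw [Fintype.sum_prod_type, Finset.sum_comm]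
  simp [Finset.sum_mul]

lemma Dext_eval (Δ : Vec (ι ⊕ (ι ⊕ ι × ι)) → (Fin 1 → Vec (ι ⊕ (ι ⊕ ι × ι))) → ℝ)
    (hΔ : Δ = fun b w => ∑ ν, (∑ μ, b (Sum.inr (Sum.inr (μ, ν))) * b (Sum.inr (Sum.inl μ)))
        * w 0 (Sum.inl ν))
    (P : Vec (ι ⊕ (ι ⊕ ι × ι))) (V : Fin 2 → Vec (ι ⊕ (ι ⊕ ι × ι))) :
    Dext Δ P V =
      (∑ ν, (∑ μ, (V 0 (Sum.inr (Sum.inr (μ, ν))) * P (Sum.inr (Sum.inl μ))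
          + P (Sum.inr (Sum.inr (μ, ν))) * V 0 (Sum.inr (Sum.inl μ)))) * V 1 (Sum.inl ν))
      - (∑ ν, (∑ μ, (V 1 (Sum.inr (Sum.inr (μ, ν))) * P (Sum.inr (Sum.inl μ))
          + P (Sum.inr (Sum.inr (μ, ν))) * V 1 (Sum.inr (Sum.inl μ)))) * V 0 (Sum.inl ν)) := by
  subst hΔ
  unfold Dext
  rw [Fin.sum_univ_two]
  have h0 : (fun y : Vec (ι ⊕ (ι ⊕ ι × ι)) =>
      ∑ ν, (∑ μ, y (Sum.inr (Sum.inr (μ, ν))) * y (Sum.inr (Sum.inl μ)))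
        * (fun j => V ((0 : Fin 2).succAbove j)) 0 (Sum.inl ν))
      = (fun y => ∑ ν, (∑ μ, y (Sum.inr (Sum.inr (μ, ν))) * y (Sum.inr (Sum.inl μ)))
        * V 1 (Sum.inl ν)) := rfl
  have h1 : (fun y : Vec (ι ⊕ (ι ⊕ ι × ι)) =>
      ∑ ν, (∑ μ, y (Sum.inr (Sum.inr (μ, ν))) * y (Sum.inr (Sum.inl μ)))
        * (fun j => V ((1 : Fin 2).succAbove j)) 0 (Sum.inl ν))
      = (fun y => ∑ ν, (∑ μ, y (Sum.inr (Sum.inr (μ, ν))) * y (Sum.inr (Sum.inl μ)))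
        * V 0 (Sum.inl ν)) := rfl
  simp only [h0, h1, key_fderiv, Fin.val_zero, Fin.val_one, pow_zero, pow_one]
  ring


lemma sum_mul_delta {J : Type} [Fintype J] [DecidableEq J] (g : J → ℝ) (x : J) :
    ∑ c, g c * (if x = c then (1:ℝ) else 0) = g x := by
  simp [mul_ite, Finset.sum_ite_eq]

lemma dT2one_eval (Δ : Vec (ι ⊕ (ι ⊕ ι × ι)) → (Fin 1 → Vec (ι ⊕ (ι ⊕ ι × ι))) → ℝ)
    (hΔ : Δ = fun b w => ∑ ν, (∑ μ, b (Sum.inr (Sum.inr (μ, ν))) * b (Sum.inr (Sum.inl μ)))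
        * w 0 (Sum.inl ν))
    (b : Vec (ι ⊕ ι × ι)) (xdv : Vec ι) (W : Biv (ι ⊕ (ι ⊕ ι × ι))) :
    dT2one Δ (Sum.elim (b ∘ Sum.inl) (Sum.elim xdv (b ∘ Sum.inr)), W)
      = -(1/2 : ℝ) * ∑ ν, ∑ μ,
          ((W (Sum.inr (Sum.inl μ)) (Sum.inl ν) - W (Sum.inl ν) (Sum.inr (Sum.inl μ)))
              * b (Sum.inr (μ, ν))
           + (W (Sum.inr (Sum.inr (μ, ν))) (Sum.inl ν) - W (Sum.inl ν) (Sum.inr (Sum.inr (μ, ν))))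
              * xdv μ) := by
  unfold dT2one iT2
  simp only [Dext_eval Δ hΔ, Matrix.cons_val_zero, Matrix.cons_val_one, Matrix.head_cons,
    Pi.single_apply, Sum.elim_inl, Sum.elim_inr, Function.comp_apply]
  have L1 : ∀ (V : (ι ⊕ (ι ⊕ ι × ι)) → ℝ) (h : ι → ℝ),
      (∑ c : ι ⊕ (ι ⊕ ι × ι), V c *
          ∑ ν, h ν * (if (Sum.inl ν : ι ⊕ (ι ⊕ ι × ι)) = c then (1:ℝ) else 0))
        = ∑ ν, h ν * V (Sum.inl ν) := by
    intro V h
    have e1 : ∀ c, V c * (∑ ν, h ν * (if (Sum.inl ν : ι ⊕ (ι ⊕ ι × ι)) = c then (1:ℝ) else 0))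
        = ∑ ν, h ν * (V c * (if (Sum.inl ν : ι ⊕ (ι ⊕ ι × ι)) = c then (1:ℝ) else 0)) := by
      intro c
      rw [Finset.mul_sum]
      exact Finset.sum_congr rfl fun ν _ => by ring
    simp_rw [e1]
    rw [Finset.sum_comm]
    exact Finset.sum_congr rfl fun ν _ => by rw [← Finset.mul_sum, sum_mul_delta]
  have L2 : ∀ (V : (ι ⊕ (ι ⊕ ι × ι)) → ℝ) (ν : ι),
      (∑ a : ι ⊕ (ι ⊕ ι × ι),
        (∑ μ, ((if (Sum.inr (Sum.inr (μ, ν)) : ι ⊕ (ι ⊕ ι × ι)) = a then (1:ℝ) else 0) * xdv μ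
          + b (Sum.inr (μ, ν)) * (if (Sum.inr (Sum.inl μ) : ι ⊕ (ι ⊕ ι × ι)) = a then (1:ℝ) else 0))) * V a)
        = ∑ μ, (xdv μ * V (Sum.inr (Sum.inr (μ, ν))) + b (Sum.inr (μ, ν)) * V (Sum.inr (Sum.inl μ))) := by
    intro V ν
    simp_rw [Finset.sum_mul]
    rw [Finset.sum_comm]
    refine Finset.sum_congr rfl fun μ _ => ?_
    have e2 : ∀ a, ((if (Sum.inr (Sum.inr (μ, ν)) : ι ⊕ (ι ⊕ ι × ι)) = a then (1:ℝ) else 0) * xdv μ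
          + b (Sum.inr (μ, ν)) * (if (Sum.inr (Sum.inl μ) : ι ⊕ (ι ⊕ ι × ι)) = a then (1:ℝ) else 0)) * V a
        = xdv μ * (V a * (if (Sum.inr (Sum.inr (μ, ν)) : ι ⊕ (ι ⊕ ι × ι)) = a then (1:ℝ) else 0))
          + b (Sum.inr (μ, ν)) * (V a * (if (Sum.inr (Sum.inl μ) : ι ⊕ (ι ⊕ ι × ι)) = a then (1:ℝ) else 0)) :=
      fun a => by ring
    simp_rw [e2, Finset.sum_add_distrib, ← Finset.mul_sum, sum_mul_delta]
  simp_rw [mul_sub, Finset.sum_sub_distrib]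
  have T1 : (∑ a : ι ⊕ (ι ⊕ ι × ι), ∑ c : ι ⊕ (ι ⊕ ι × ι), W a c *
        ∑ ν, (∑ μ, ((if (Sum.inr (Sum.inr (μ, ν)) : ι ⊕ (ι ⊕ ι × ι)) = a then (1:ℝ) else 0) * xdv μ
            + b (Sum.inr (μ, ν)) * (if (Sum.inr (Sum.inl μ) : ι ⊕ (ι ⊕ ι × ι)) = a then (1:ℝ) else 0)))
          * (if (Sum.inl ν : ι ⊕ (ι ⊕ ι × ι)) = c then (1:ℝ) else 0))
      = ∑ ν, ∑ μ, (xdv μ * W (Sum.inr (Sum.inr (μ, ν))) (Sum.inl ν)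
          + b (Sum.inr (μ, ν)) * W (Sum.inr (Sum.inl μ)) (Sum.inl ν)) := by
    have step : ∀ a, (∑ c : ι ⊕ (ι ⊕ ι × ι), W a c *
        ∑ ν, (∑ μ, ((if (Sum.inr (Sum.inr (μ, ν)) : ι ⊕ (ι ⊕ ι × ι)) = a then (1:ℝ) else 0) * xdv μ
            + b (Sum.inr (μ, ν)) * (if (Sum.inr (Sum.inl μ) : ι ⊕ (ι ⊕ ι × ι)) = a then (1:ℝ) else 0)))
          * (if (Sum.inl ν : ι ⊕ (ι ⊕ ι × ι)) = c then (1:ℝ) else 0))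
        = ∑ ν, (∑ μ, ((if (Sum.inr (Sum.inr (μ, ν)) : ι ⊕ (ι ⊕ ι × ι)) = a then (1:ℝ) else 0) * xdv μ
            + b (Sum.inr (μ, ν)) * (if (Sum.inr (Sum.inl μ) : ι ⊕ (ι ⊕ ι × ι)) = a then (1:ℝ) else 0)))
          * W a (Sum.inl ν) := fun a => L1 (W a) _
    simp_rw [step]
    rw [Finset.sum_comm]
    exact Finset.sum_congr rfl fun ν _ => L2 (fun a => W a (Sum.inl ν)) ν
  have T2 : (∑ a : ι ⊕ (ι ⊕ ι × ι), ∑ c : ι ⊕ (ι ⊕ ι × ι), W a c *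
        ∑ ν, (∑ μ, ((if (Sum.inr (Sum.inr (μ, ν)) : ι ⊕ (ι ⊕ ι × ι)) = c then (1:ℝ) else 0) * xdv μ
            + b (Sum.inr (μ, ν)) * (if (Sum.inr (Sum.inl μ) : ι ⊕ (ι ⊕ ι × ι)) = c then (1:ℝ) else 0)))
          * (if (Sum.inl ν : ι ⊕ (ι ⊕ ι × ι)) = a then (1:ℝ) else 0))
      = ∑ ν, ∑ μ, (xdv μ * W (Sum.inl ν) (Sum.inr (Sum.inr (μ, ν)))
          + b (Sum.inr (μ, ν)) * W (Sum.inl ν) (Sum.inr (Sum.inl μ))) := by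
    rw [Finset.sum_comm]
    have step : ∀ c, (∑ a : ι ⊕ (ι ⊕ ι × ι), W a c *
        ∑ ν, (∑ μ, ((if (Sum.inr (Sum.inr (μ, ν)) : ι ⊕ (ι ⊕ ι × ι)) = c then (1:ℝ) else 0) * xdv μ
            + b (Sum.inr (μ, ν)) * (if (Sum.inr (Sum.inl μ) : ι ⊕ (ι ⊕ ι × ι)) = c then (1:ℝ) else 0)))
          * (if (Sum.inl ν : ι ⊕ (ι ⊕ ι × ι)) = a then (1:ℝ) else 0))
        = ∑ ν, (∑ μ, ((if (Sum.inr (Sum.inr (μ, ν)) : ι ⊕ (ι ⊕ ι × ι)) = c then (1:ℝ) else 0) * xdv μ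
            + b (Sum.inr (μ, ν)) * (if (Sum.inr (Sum.inl μ) : ι ⊕ (ι ⊕ ι × ι)) = c then (1:ℝ) else 0)))
          * W (Sum.inl ν) c := fun c => L1 (fun a => W a c) _
    simp_rw [step]
    rw [Finset.sum_comm]
    exact Finset.sum_congr rfl fun ν _ => L2 (fun c => W (Sum.inl ν) c) ν
  rw [T1, T2, ← Finset.sum_sub_distrib]
  simp_rw [← Finset.sum_sub_distrib]
  rw [neg_mul_eq_neg_mul]
  congr 1
  exact Finset.sum_congr rfl fun ν _ => Finset.sum_congr rfl fun μ _ => by ring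

def ext0 {ι : Type} (U : Biv (ι ⊕ ι × ι)) : Biv (ι ⊕ (ι ⊕ ι × ι)) := fun i j =>
  match i, j with
  | Sum.inl μ, Sum.inl ν => U (Sum.inl μ) (Sum.inl ν)
  | Sum.inl μ, Sum.inr (Sum.inr q) => U (Sum.inl μ) (Sum.inr q)
  | Sum.inr (Sum.inr q), Sum.inl ν => U (Sum.inr q) (Sum.inl ν)
  | Sum.inr (Sum.inr q), Sum.inr (Sum.inr q') => U (Sum.inr q) (Sum.inr q')
  | _, _ => 0

lemma ext0_m1 {U : Biv (ι ⊕ ι × ι)} (μ : ι) (j : ι ⊕ (ι ⊕ ι × ι)) :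
    ext0 U (Sum.inr (Sum.inl μ)) j = 0 := by
  rcases j with ν | μ' | q <;> rfl

lemma ext0_m2 {U : Biv (ι ⊕ ι × ι)} (i : ι ⊕ (ι ⊕ ι × ι)) (μ : ι) :
    ext0 U i (Sum.inr (Sum.inl μ)) = 0 := by
  rcases i with ν | μ' | q <;> rfl

lemma ext0_anti {U : Biv (ι ⊕ ι × ι)} (hU : IsAnti U) : IsAnti (ext0 U) := by
  intro i j
  rcases i with ν | μ' | q <;> rcases j with ν' | μ'' | q' <;>
    simp only [ext0] <;> first | (rw [hU]) | simp

lemma ext0_p {U : Biv (ι ⊕ ι × ι)} (hUp : ∀ i μ ν, U i (Sum.inr (μ, ν)) = - U i (Sum.inr (ν, μ)))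
    (i : ι ⊕ (ι ⊕ ι × ι)) (μ ν : ι) :
    ext0 U i (Sum.inr (Sum.inr (μ, ν))) = - ext0 U i (Sum.inr (Sum.inr (ν, μ))) := by
  rcases i with ν' | μ'' | q' <;> simp only [ext0] <;> first | (rw [hUp]) | simp

def zmat (l0 k0 : ι) : Biv (ι ⊕ (ι ⊕ ι × ι)) := fun i j =>
  (if i = Sum.inl l0 then (1:ℝ) else 0) * (if j = Sum.inr (Sum.inl k0) then (1:ℝ) else 0)
  - (if i = Sum.inr (Sum.inl k0) then (1:ℝ) else 0) * (if j = Sum.inl l0 then (1:ℝ) else 0)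

lemma zmat_anti (l0 k0 : ι) : IsAnti (zmat l0 k0) := by
  intro i j; simp only [zmat]; ring

lemma zmat_rr (l0 k0 : ι) (i : ι ⊕ (ι ⊕ ι × ι)) (q : ι × ι) :
    zmat l0 k0 i (Sum.inr (Sum.inr q)) = 0 := by
  simp [zmat]

lemma zmat_rr' (l0 k0 : ι) (j : ι ⊕ (ι ⊕ ι × ι)) (q : ι × ι) :
    zmat l0 k0 (Sum.inr (Sum.inr q)) j = 0 := by
  simp [zmat]

lemma zmat_ll (l0 k0 : ι) (μ ν : ι) :
    zmat l0 k0 (Sum.inl μ) (Sum.inl ν) = 0 := by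
  simp [zmat]

end Aux2

theorem alpha2_graph
    (Δ : Vec (ι ⊕ (ι ⊕ ι × ι)) → (Fin 1 → Vec (ι ⊕ (ι ⊕ ι × ι))) → ℝ)
    (hΔ : Δ = fun b w => ∑ ν, (∑ μ, b (Sum.inr (Sum.inr (μ, ν))) * b (Sum.inr (Sum.inl μ)))
        * w 0 (Sum.inl ν))
    (b : Vec (ι ⊕ ι × ι)) (hb : ∀ μ ν, b (Sum.inr (μ, ν)) = - b (Sum.inr (ν, μ)))
    (U : Biv (ι ⊕ ι × ι)) (hU : IsAnti U)
    (hUp : ∀ i μ ν, U i (Sum.inr (μ, ν)) = - U i (Sum.inr (ν, μ)))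
    (x' : Vec ι) (Xd : Biv ι) (hXd : IsAnti Xd) (pc : Vec ι) (f : Biv ι) (hf : IsAnti f) :
    -- the relation `α²_M` ...
    ((x' = b ∘ Sum.inl ∧ Xd = fun μ ν => U (Sum.inl μ) (Sum.inl ν)) ∧
      ∀ (xdv : Vec ι) (W : Biv (ι ⊕ (ι ⊕ ι × ι))), IsAnti W →
        (∀ i μ ν, W i (Sum.inr (Sum.inr (μ, ν))) = - W i (Sum.inr (Sum.inr (ν, μ)))) →
        -- `W` projects onto `u`:
        (∀ μ ν, W (Sum.inl μ) (Sum.inl ν) = U (Sum.inl μ) (Sum.inl ν)) →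
        (∀ μ q, W (Sum.inl μ) (Sum.inr (Sum.inr q)) = U (Sum.inl μ) (Sum.inr q)) →
        (∀ q q', W (Sum.inr (Sum.inr q)) (Sum.inr (Sum.inr q')) = U (Sum.inr q) (Sum.inr q')) →
        -- `W` projects onto a `w ∈ ∧²T(TM)` with `∧²Tτ_M(w) = (x', Ẋ)`;
        -- the duality condition `⟨p̃, κ²_M(w)⟩ = d_T^2 Δ²_M (u, w)`:
        (∑ ρ, pc ρ * xdv ρ) + (1/2 : ℝ) * (∑ l, ∑ k, f l k *
            (W (Sum.inl l) (Sum.inr (Sum.inl k)) - W (Sum.inl k) (Sum.inr (Sum.inl l)))) =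
          dT2one Δ (Sum.elim (b ∘ Sum.inl) (Sum.elim xdv (b ∘ Sum.inr)), W))
    -- ... holds iff the covector is the image of `u` under the coordinate map `α²_M`:
    ↔ (x' = b ∘ Sum.inl ∧ (Xd = fun μ ν => U (Sum.inl μ) (Sum.inl ν)) ∧
        (pc = fun ρ => - ∑ η, U (Sum.inl η) (Sum.inr (η, ρ))) ∧
        (f = fun l k => - b (Sum.inr (l, k)))) := by
  constructor
  · rintro ⟨⟨hx, hXd'⟩, hdual⟩
    refine ⟨hx, hXd', ?_, ?_⟩
    · funext ρ
      have h1 := hdual (Pi.single ρ 1) (ext0 U) (ext0_anti hU) (ext0_p hUp)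
        (fun μ ν => rfl) (fun μ q => rfl) (fun q q' => rfl)
      rw [dT2one_eval Δ hΔ b (Pi.single ρ 1) (ext0 U)] at h1
      simp only [ext0_m1, ext0_m2, sub_zero, zero_sub, sub_self, mul_zero, zero_mul,
        Finset.sum_const_zero, add_zero, zero_add, Pi.single_apply, mul_ite, mul_one,
        Finset.sum_ite_eq', Finset.mem_univ, if_true, ite_mul, one_mul] at h1
      rw [h1]
      have e : ∀ x, ext0 U (Sum.inr (Sum.inr (ρ, x))) (Sum.inl x)
            - ext0 U (Sum.inl x) (Sum.inr (Sum.inr (ρ, x)))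
          = (-2) * (- U (Sum.inl x) (Sum.inr (x, ρ))) := by
        intro x
        show U (Sum.inr (ρ, x)) (Sum.inl x) - U (Sum.inl x) (Sum.inr (ρ, x)) = _
        rw [hU (Sum.inr (ρ, x)) (Sum.inl x), hUp (Sum.inl x) ρ x]
        ring
      simp_rw [e, ← Finset.mul_sum, ← Finset.sum_neg_distrib]
      ring
    · funext l0 k0
      have h2 := hdual 0 (fun i j => ext0 U i j + zmat l0 k0 i j)
        (fun i j => by dsimp only; rw [ext0_anti hU i j, zmat_anti l0 k0 i j]; ring)
        (fun i μ ν => by rw [ext0_p hUp, zmat_rr, zmat_rr]; ring)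
        (fun μ ν => by rw [zmat_ll]; exact add_zero _)
        (fun μ q => by rw [zmat_rr]; exact add_zero _)
        (fun q q' => by rw [zmat_rr]; exact add_zero _)
      rw [dT2one_eval Δ hΔ b 0 (fun i j => ext0 U i j + zmat l0 k0 i j)] at h2
      simp only [ext0_m1, ext0_m2, Pi.zero_apply, mul_zero, zero_mul, add_zero, zero_add,
        Finset.sum_const_zero, zmat, sub_zero, zero_sub] at h2
      simp only [Sum.inl.injEq, Sum.inr.injEq, reduceCtorEq, if_false, ite_mul, mul_ite,
        one_mul, mul_one, zero_mul, mul_zero, sub_zero, zero_sub, mul_sub, mul_neg,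
        Finset.sum_sub_distrib, Finset.sum_neg_distrib, Finset.sum_ite_eq', Finset.mem_univ,
        if_true, Finset.sum_const_zero] at h2
      simp only [Finset.sum_ite_irrel, sub_mul, neg_mul, ite_mul, zero_mul, one_mul,
        Finset.sum_sub_distrib, Finset.sum_neg_distrib, Finset.sum_ite_eq', Finset.mem_univ,
        if_true, Finset.sum_const_zero] at h2
      have := hf l0 k0
      have := hb l0 k0
      linarith
  · rintro ⟨hx, hXd', hpc, hfeq⟩
    refine ⟨⟨hx, hXd'⟩, ?_⟩
    intro xdv W hW hWp hp1 hp2 hp3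
    rw [dT2one_eval Δ hΔ b xdv W]
    subst hpc
    subst hfeq
    have hA : (∑ ρ, (- ∑ η, U (Sum.inl η) (Sum.inr (η, ρ))) * xdv ρ)
        = ∑ ν, ∑ μ, U (Sum.inl ν) (Sum.inr (μ, ν)) * xdv μ := by
      have e : ∀ ρ, (- ∑ η, U (Sum.inl η) (Sum.inr (η, ρ))) * xdv ρ
          = ∑ η, U (Sum.inl η) (Sum.inr (ρ, η)) * xdv ρ := by
        intro ρ
        rw [← Finset.sum_mul]
        congr 1
        rw [← Finset.sum_neg_distrib]
        exact Finset.sum_congr rfl fun η _ => (hUp (Sum.inl η) ρ η).symm ▸ rfl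
      simp_rw [e]
      exact Finset.sum_comm
    have hB : (1/2 : ℝ) * (∑ l, ∑ k, (- b (Sum.inr (l, k))) *
          (W (Sum.inl l) (Sum.inr (Sum.inl k)) - W (Sum.inl k) (Sum.inr (Sum.inl l))))
        = ∑ ν, ∑ μ, W (Sum.inl ν) (Sum.inr (Sum.inl μ)) * b (Sum.inr (μ, ν)) := by
      have e : ∀ l k, (- b (Sum.inr (l, k))) *
            (W (Sum.inl l) (Sum.inr (Sum.inl k)) - W (Sum.inl k) (Sum.inr (Sum.inl l)))
          = W (Sum.inl l) (Sum.inr (Sum.inl k)) * b (Sum.inr (k, l))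
            + W (Sum.inl k) (Sum.inr (Sum.inl l)) * b (Sum.inr (l, k)) := by
        intro l k; rw [hb l k]; ring
      simp_rw [e, Finset.sum_add_distrib]
      have e2 : ∑ l, ∑ k, W (Sum.inl k) (Sum.inr (Sum.inl l)) * b (Sum.inr (l, k))
          = ∑ l, ∑ k, W (Sum.inl l) (Sum.inr (Sum.inl k)) * b (Sum.inr (k, l)) :=
        Finset.sum_comm
      rw [e2]
      ring
    have hR : (-(1/2 : ℝ)) * (∑ ν, ∑ μ,
          ((W (Sum.inr (Sum.inl μ)) (Sum.inl ν) - W (Sum.inl ν) (Sum.inr (Sum.inl μ)))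
              * b (Sum.inr (μ, ν))
           + (W (Sum.inr (Sum.inr (μ, ν))) (Sum.inl ν) - W (Sum.inl ν) (Sum.inr (Sum.inr (μ, ν))))
              * xdv μ))
        = ∑ ν, ∑ μ, (W (Sum.inl ν) (Sum.inr (Sum.inl μ)) * b (Sum.inr (μ, ν))
            + U (Sum.inl ν) (Sum.inr (μ, ν)) * xdv μ) := by
      have e : ∀ ν μ, ((W (Sum.inr (Sum.inl μ)) (Sum.inl ν) - W (Sum.inl ν) (Sum.inr (Sum.inl μ)))
              * b (Sum.inr (μ, ν))
           + (W (Sum.inr (Sum.inr (μ, ν))) (Sum.inl ν) - W (Sum.inl ν) (Sum.inr (Sum.inr (μ, ν))))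
              * xdv μ)
          = (-2) * (W (Sum.inl ν) (Sum.inr (Sum.inl μ)) * b (Sum.inr (μ, ν))
              + U (Sum.inl ν) (Sum.inr (μ, ν)) * xdv μ) := by
        intro ν μ
        rw [hW (Sum.inr (Sum.inl μ)) (Sum.inl ν), hW (Sum.inr (Sum.inr (μ, ν))) (Sum.inl ν),
          hp2 ν (μ, ν)]
        ring
      simp_rw [e, ← Finset.mul_sum]
      ring
    rw [hR, hA, hB, ← Finset.sum_add_distrib]
    simp_rw [← Finset.sum_add_distrib]
    exact Finset.sum_congr rfl fun ν _ => Finset.sum_congr rfl fun μ _ => by ring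

end
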